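/- Let 0 < δ < π. Then z · K(z) → α² as |z| → ∞ within the sector {z ≠ 0 : |arg z| ≤ π − δ}; equivalently, K(z) = (α²/z)(1 + o(1)) in this sector. In particular, for every ε > 0 there exists R such that |z K(z) − α²| < ε for all z in the sector with |z| ≥ R. -/

import Mathlib

open Filter Topology

/- Indexing convention: the paper's sequences `(a_k)_{k ≥ 1}`, `(b_k)_{k ≥ 1}` are
encoded as functions `a b : ℕ → ℝ`, where index `k : ℕ` corresponds to the paper's
index `k + 1` (so `b 0 = b_1`, etc.). -/

lemma sector_bound (δ : ℝ) (hδ0 : 0 < δ) (hδπ : δ < Real.pi) (z : ℂ) (hz : z ≠ 0)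
    (harg : |z.arg| ≤ Real.pi - δ) (s : ℝ) (hs : 0 ≤ s) :
    Real.sin δ * ‖z‖ ≤ ‖z + s‖ ∧
    Real.sin δ * s ≤ ‖z + s‖ := by
  have hsin : 0 < Real.sin δ := Real.sin_pos_of_pos_of_lt_pi hδ0 hδπ
  set t := ‖z‖ with ht
  have ht0 : 0 ≤ t := norm_nonneg z
  have hre : z.re = t * Real.cos z.arg := by
    rw [Complex.cos_arg hz]
    field_simp [ht, norm_ne_zero_iff.mpr hz]
    rw [ht]
  have hcos : Real.cos (Real.pi - δ) ≤ Real.cos z.arg := by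
    rw [← Real.cos_abs z.arg]
    exact Real.cos_le_cos_of_nonneg_of_le_pi (abs_nonneg _) (by linarith) harg
  have hre' : -(Real.cos δ) * t ≤ z.re := by
    rw [hre]
    have h := Real.cos_pi_sub δ
    nlinarith [hcos, ht0]
  have hsq : (t^2 - 2 * Real.cos δ * s * t + s^2) ≤ ‖z + s‖^2 := by
    have h1 : ‖z + s‖^2 = (z.re + s)^2 + z.im^2 := by
      rw [Complex.sq_norm, Complex.normSq_apply]; simp; ring
    have ht2 : t^2 = z.re^2 + z.im^2 := by
      rw [ht, Complex.sq_norm, Complex.normSq_apply]; ring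
    nlinarith [hre', hs]
  have hpyth := Real.sin_sq_add_cos_sq δ
  constructor
  · refine le_of_pow_le_pow_left₀ two_ne_zero (norm_nonneg _) ?_
    nlinarith [sq_nonneg (Real.cos δ * t - s), mul_nonneg hsin.le ht0]
  · refine le_of_pow_le_pow_left₀ two_ne_zero (norm_nonneg _) ?_
    nlinarith [sq_nonneg (Real.cos δ * s - t), mul_nonneg hsin.le hs]

/-- `GPK a b z = K(z) = ∑ a_k / (z + b_k)`. -/
noncomputable def GPK (a b : ℕ → ℝ) (z : ℂ) : ℂ := ∑' k : ℕ, (a k : ℂ) / (z + (b k : ℂ))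

/-- `GPG a b n z = G_n(z) = z + n² K(z)`. -/
noncomputable def GPG (a b : ℕ → ℝ) (n : ℕ) (z : ℂ) : ℂ := z + (n : ℂ) ^ 2 * GPK a b z

/-- `z K(z) → α²` as `|z| → ∞` in the sector `|arg z| ≤ π - δ`, i.e.
`K(z) = (α²/z)(1 + o(1))` there. -/
theorem zK_tendsto_in_sector
    (a b : ℕ → ℝ) (α : ℝ)
    (ha : ∀ k, 0 < a k) (hα : 0 < α) (hsum : HasSum a (α ^ 2))
    (hb0 : 0 ≤ b 0) (hbmono : StrictMono b) (hbtop : Tendsto b atTop atTop)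
    (δ : ℝ) (hδ0 : 0 < δ) (hδπ : δ < Real.pi) :
    ∀ ε : ℝ, 0 < ε → ∃ R : ℝ, ∀ z : ℂ, z ≠ 0 → |z.arg| ≤ Real.pi - δ →
      R ≤ ‖z‖ → ‖z * GPK a b z - (α : ℂ) ^ 2‖ < ε := by
  intro ε hε
  have hsin : 0 < Real.sin δ := Real.sin_pos_of_pos_of_lt_pi hδ0 hδπ
  have hbnn : ∀ k, 0 ≤ b k := fun k => hb0.trans (hbmono.monotone (Nat.zero_le k))
  have hsa : Summable a := hsum.summable
  obtain ⟨N, hN⟩ : ∃ N, α ^ 2 - ε * Real.sin δ / 2 < ∑ i ∈ Finset.range N, a i :=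
    (hsum.tendsto_sum_nat.eventually (eventually_gt_nhds (by nlinarith))).exists
  set B := b N with hBdef
  have hB : 0 ≤ B := hbnn N
  refine ⟨max 1 (2 * α ^ 2 * B / (ε * Real.sin δ)), ?_⟩
  intro z hz harg hR
  have hz1 : 1 ≤ ‖z‖ := le_trans (le_max_left _ _) hR
  have hz0 : 0 < ‖z‖ := lt_of_lt_of_le one_pos hz1
  have key := fun k => sector_bound δ hδ0 hδπ z hz harg (b k) (hbnn k)
  have habs : ∀ k, 0 < ‖z + (b k : ℂ)‖ := by
    intro k
    have h1 := (key k).1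
    nlinarith [mul_pos hsin hz0]
  have hne : ∀ k, z + (b k : ℂ) ≠ 0 := fun k => by
    intro h; have := habs k; rw [h, norm_zero] at this; exact lt_irrefl 0 this
  -- summability of K
  have hsumf : Summable (fun k => (a k : ℂ) / (z + (b k : ℂ))) := by
    apply Summable.of_norm_bounded (g := fun k => a k / Real.sin δ) (hsa.div_const _)
    intro k
    rw [norm_div, Complex.norm_real, Real.norm_of_nonneg (ha k).le]
    apply div_le_div_of_nonneg_left (ha k).le hsin
    nlinarith [(key k).1, mul_nonneg hsin.le hz0.le]
  have hK : HasSum (fun k => (a k : ℂ) / (z + (b k : ℂ))) (GPK a b z) := hsumf.hasSum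
  have hA : HasSum (fun k => ((a k : ℝ) : ℂ)) ((α : ℂ) ^ 2) := by
    have h := Complex.hasSum_ofReal.2 hsum
    convert h using 1
    push_cast
    ring
  have hg : HasSum (fun k => z * ((a k : ℂ) / (z + (b k : ℂ))) - (a k : ℂ))
      (z * GPK a b z - (α : ℂ) ^ 2) := (hK.mul_left z).sub hA
  -- norm of each term
  set h : ℕ → ℝ := fun k => a k * b k / ‖z + (b k : ℂ)‖ with hhdef
  have hgn : ∀ k, ‖z * ((a k : ℂ) / (z + (b k : ℂ))) - (a k : ℂ)‖ = h k := by
    intro k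
    have he : z * ((a k : ℂ) / (z + (b k : ℂ))) - (a k : ℂ)
        = -(((a k * b k : ℝ) : ℂ) / (z + (b k : ℂ))) := by
      push_cast
      field_simp [hne k]
      ring
    rw [he, norm_neg, norm_div, Complex.norm_real,
      Real.norm_of_nonneg (mul_nonneg (ha k).le (hbnn k))]
  have hhn : ∀ k, 0 ≤ h k := fun k =>
    div_nonneg (mul_nonneg (ha k).le (hbnn k)) (habs k).le
  have hhb : ∀ k, h k ≤ a k / Real.sin δ := by
    intro k
    rw [hhdef]
    rw [div_le_div_iff₀ (habs k) hsin]
    nlinarith [(key k).2, (ha k).le]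
  have hsh : Summable h := Summable.of_nonneg_of_le hhn hhb (hsa.div_const _)
  -- main bound
  have h1 : ‖z * GPK a b z - (α : ℂ) ^ 2‖ ≤ ∑' k, h k := by
    rw [← hg.tsum_eq]
    have hfun : (fun k => ‖z * ((a k : ℂ) / (z + (b k : ℂ))) - (a k : ℂ)‖) = h := funext hgn
    calc ‖∑' k, (z * ((a k : ℂ) / (z + (b k : ℂ))) - (a k : ℂ))‖
        ≤ ∑' k, ‖z * ((a k : ℂ) / (z + (b k : ℂ))) - (a k : ℂ)‖ :=
          norm_tsum_le_tsum_norm (hfun ▸ hsh)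
      _ = ∑' k, h k := by rw [hfun]
  have hsplit : (∑ i ∈ Finset.range N, h i) + ∑' k, h (k + N) = ∑' k, h k :=
    Summable.sum_add_tsum_nat_add N hsh
  -- head bound
  have hhead : ∑ i ∈ Finset.range N, h i ≤ ε / 2 := by
    have hc : (B / (Real.sin δ * ‖z‖)) * (Real.sin δ * ‖z‖) = B := by
      field_simp
    have hc0 : 0 ≤ B / (Real.sin δ * ‖z‖) := by positivity
    have hstep : ∀ i ∈ Finset.range N, h i ≤ a i * (B / (Real.sin δ * ‖z‖)) := by
      intro i hi
      rw [hhdef]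
      have hbi : b i ≤ B := (hbmono.monotone (le_of_lt (Finset.mem_range.1 hi)))
      rw [div_le_iff₀ (habs i)]
      nlinarith [(key i).1, (ha i).le, hbnn i, mul_pos hsin hz0,
        mul_le_mul_of_nonneg_left hbi (ha i).le,
        mul_le_mul_of_nonneg_left (key i).1 (mul_nonneg (ha i).le hc0), hc]
    calc ∑ i ∈ Finset.range N, h i
        ≤ ∑ i ∈ Finset.range N, a i * (B / (Real.sin δ * ‖z‖)) :=
          Finset.sum_le_sum hstep
      _ = (∑ i ∈ Finset.range N, a i) * (B / (Real.sin δ * ‖z‖)) :=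
          (Finset.sum_mul _ _ _).symm
      _ ≤ α ^ 2 * (B / (Real.sin δ * ‖z‖)) := by
          exact mul_le_mul_of_nonneg_right
            (sum_le_hasSum (Finset.range N) (fun i _ => (ha i).le) hsum) hc0
      _ ≤ ε / 2 := by
          have hR2 : 2 * α ^ 2 * B / (ε * Real.sin δ) ≤ ‖z‖ :=
            le_trans (le_max_right _ _) hR
          rw [div_le_iff₀ (mul_pos hε hsin)] at hR2
          nlinarith [hc, hR2, mul_pos hsin hz0, hc0, sq_nonneg α]
  -- tail bound
  have htail : ∑' k, h (k + N) < ε / 2 := by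
    have hta : Summable (fun k => a (k + N)) := (summable_nat_add_iff N).2 hsa
    have h2 : ∑' k, h (k + N) ≤ (∑' k, a (k + N)) / Real.sin δ := by
      rw [← tsum_div_const]
      exact Summable.tsum_le_tsum (fun k => hhb (k + N)) ((summable_nat_add_iff N).2 hsh)
        (hta.div_const _)
    have h3 : ∑' k, a (k + N) = α ^ 2 - ∑ i ∈ Finset.range N, a i := by
      have := Summable.sum_add_tsum_nat_add N hsa
      rw [hsum.tsum_eq] at this
      linarith
    have h4 : (∑' k, a (k + N)) / Real.sin δ < ε / 2 := by
      rw [div_lt_iff₀ hsin, h3]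
      nlinarith
    linarith
  linarith
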